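/- Let (μ_n) be a norm bounded sequence in ba(𝒜), and K_n ⊆ K_{n+1} ∩ L¹(μ_n) for each n; set K = ⋃_n K_n. Assume sup_k limsup_n ‖|μ_n| ∧ |μ_k|‖ > 0 and limsup_n ‖f‖_{L¹(μ_n)} < ∞ for every f ∈ K. Then there exists a finitely additive probability μ on 𝒜 such that K ⊆ L¹(μ). -/

import Mathlib

noncomputable section
open Filter Set
open Topology
open scoped ENNReal

variable {Ω : Type}

/-- `C` is an algebra of subsets of `Ω`. -/
def IsSetAlg (C : Set (Set Ω)) : Prop :=
  ∅ ∈ C ∧ (∀ A ∈ C, Aᶜ ∈ C) ∧ ∀ A ∈ C, ∀ B ∈ C, A ∪ B ∈ C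

/-- `μ` is finitely additive on the algebra `C`. -/
def IsFinAdd (C : Set (Set Ω)) (μ : Set Ω → ℝ) : Prop :=
  μ ∅ = 0 ∧ ∀ A ∈ C, ∀ B ∈ C, Disjoint A B → μ (A ∪ B) = μ A + μ B

/-- `π` is a partition of `A` into finitely many members of `C`. -/
def IsPartition (C : Set (Set Ω)) (π : Finset (Set Ω)) (A : Set Ω) : Prop :=
  (∀ E ∈ π, E ∈ C) ∧ (π : Set (Set Ω)).PairwiseDisjoint id ∧
    ⋃₀ (π : Set (Set Ω)) = A

/-- The set of partial variation sums of `μ` over finite `C`-partitions of `A`. -/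
def varSums (C : Set (Set Ω)) (μ : Set Ω → ℝ) (A : Set Ω) : Set ℝ :=
  {x | ∃ π : Finset (Set Ω), IsPartition C π A ∧ x = ∑ E ∈ π, |μ E|}

/-- The total variation `|μ|(A)`. -/
def totalVar (C : Set (Set Ω)) (μ : Set Ω → ℝ) (A : Set Ω) : ℝ :=
  sSup (varSums C μ A)

/-- The total variation norm `‖μ‖ = |μ|(Ω)`. -/
def tvNorm (C : Set (Set Ω)) (μ : Set Ω → ℝ) : ℝ :=
  totalVar C μ univ

/-- `μ` has bounded total variation. -/
def BddVar (C : Set (Set Ω)) (μ : Set Ω → ℝ) : Prop :=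
  BddAbove (varSums C μ univ)

/-- `μ ∈ ba(C)`: finitely additive with bounded total variation. -/
def Memba (C : Set (Set Ω)) (μ : Set Ω → ℝ) : Prop :=
  IsFinAdd C μ ∧ BddVar C μ

/-- The lattice infimum `μ ∧ ν` in `ba(C)`. -/
def baInf (C : Set (Set Ω)) (μ ν : Set Ω → ℝ) (A : Set Ω) : ℝ :=
  sInf {x | ∃ B ∈ C, x = μ (A ∩ B) + ν (A ∩ Bᶜ)}

/-- `l` is a finitely additive probability on `C`. -/
def IsFAProb (C : Set (Set Ω)) (l : Set Ω → ℝ) : Prop :=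
  Memba C l ∧ (∀ A ∈ C, 0 ≤ l A) ∧ l univ = 1

/-- `ξ ≪ l` : (ε-δ) absolute continuity. -/
def AbsCont (C : Set (Set Ω)) (ξ l : Set Ω → ℝ) : Prop :=
  ∀ ε > (0:ℝ), ∃ δ > (0:ℝ), ∀ A ∈ C, l A < δ → totalVar C ξ A < ε

/-- The tail sets `{F n, F (n+1), ...}` of a sequence of set functions. -/
def tailSet (F : ℕ → Set Ω → ℝ) (n : ℕ) : Set (Set Ω → ℝ) :=
  {g | ∃ i, n ≤ i ∧ g = F i}

/-- The outer measure generated by `l` on `C`. -/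
def outerM (C : Set (Set Ω)) (l : Set Ω → ℝ) (B : Set Ω) : ℝ :=
  sInf {x | ∃ A ∈ C, B ⊆ A ∧ x = l A}

/-- `h` is a simple `C`-measurable function. -/
def IsSimpleFn (C : Set (Set Ω)) (h : Ω → ℝ) : Prop :=
  (Set.range h).Finite ∧ ∀ c : ℝ, {ω | h ω = c} ∈ C

/-- `f` is `l`-measurable: approximable in `l`-outer measure by simple functions. -/
def FAMeasurable (C : Set (Set Ω)) (l : Set Ω → ℝ) (f : Ω → ℝ) : Prop :=
  ∀ ε > (0:ℝ), ∃ h : Ω → ℝ, IsSimpleFn C h ∧ outerM C l {ω | ε < |f ω - h ω|} < ε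

/-- The finitely additive `L¹(l)` (upper) norm, via the layer cake formula. -/
def faL1 (C : Set (Set Ω)) (l : Set Ω → ℝ) (f : Ω → ℝ) : ENNReal :=
  ∫⁻ t in Set.Ioi (0:ℝ), ENNReal.ofReal (outerM C l {ω | t < |f ω|})

/-- `f ∈ L¹(l)` in the finitely additive (Dunford–Schwartz) sense. -/
def MemFAL1 (C : Set (Set Ω)) (l : Set Ω → ℝ) (f : Ω → ℝ) : Prop :=
  FAMeasurable C l f ∧ faL1 C l f < ⊤

section CL

variable {C : Set (Set Ω)}

lemma alg_univ (hC : IsSetAlg C) : (univ : Set Ω) ∈ C := by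
  have := hC.2.1 ∅ hC.1; simpa using this

lemma alg_union (hC : IsSetAlg C) {A B : Set Ω} (hA : A ∈ C) (hB : B ∈ C) :
    A ∪ B ∈ C := hC.2.2 A hA B hB

lemma alg_compl (hC : IsSetAlg C) {A : Set Ω} (hA : A ∈ C) : Aᶜ ∈ C :=
  hC.2.1 A hA

lemma alg_inter (hC : IsSetAlg C) {A B : Set Ω} (hA : A ∈ C) (hB : B ∈ C) :
    A ∩ B ∈ C := by
  have := alg_compl hC (alg_union hC (alg_compl hC hA) (alg_compl hC hB))
  simpa [Set.compl_union, compl_compl] using this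

lemma alg_diff (hC : IsSetAlg C) {A B : Set Ω} (hA : A ∈ C) (hB : B ∈ C) :
    A \ B ∈ C := by
  rw [Set.diff_eq]; exact alg_inter hC hA (alg_compl hC hB)

lemma alg_biInter (hC : IsSetAlg C) {ι : Type*} (F : Finset ι) (B : ι → Set Ω)
    (h : ∀ i ∈ F, B i ∈ C) : (⋂ i ∈ F, B i) ∈ C := by
  classical
  induction F using Finset.induction_on with
  | empty => simpa using alg_univ hC
  | insert a s ha ih =>
      rw [Finset.set_biInter_insert]
      exact alg_inter hC (h a (Finset.mem_insert_self a s))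
        (ih fun i hi => h i (Finset.mem_insert_of_mem hi))

lemma alg_sUnion (hC : IsSetAlg C) (π : Finset (Set Ω))
    (h : ∀ E ∈ π, E ∈ C) : ⋃₀ (π : Set (Set Ω)) ∈ C := by
  classical
  induction π using Finset.induction_on with
  | empty => simpa using hC.1
  | insert a s ha ih =>
      rw [Finset.coe_insert, Set.sUnion_insert]
      exact alg_union hC (h a (Finset.mem_insert_self a s))
        (ih fun E hE => h E (Finset.mem_insert_of_mem hE))

/-- Additivity on the algebra. -/
def AddOn (C : Set (Set Ω)) (ξ : Set Ω → ℝ) : Prop :=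
  ∀ A ∈ C, ∀ B ∈ C, Disjoint A B → ξ (A ∪ B) = ξ A + ξ B

lemma mono_of_addOn (hC : IsSetAlg C) {ξ : Set Ω → ℝ} (hadd : AddOn C ξ)
    (hnn : ∀ A ∈ C, 0 ≤ ξ A) {A B : Set Ω} (hA : A ∈ C) (hB : B ∈ C) (hAB : A ⊆ B) :
    ξ A ≤ ξ B := by
  have h1 : B = A ∪ (B \ A) := (Set.union_diff_cancel hAB).symm
  have h2 := hadd A hA (B \ A) (alg_diff hC hB hA) disjoint_sdiff_right
  rw [← h1] at h2
  have := hnn (B \ A) (alg_diff hC hB hA)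
  linarith

lemma sum_of_disjoint_fam (hC : IsSetAlg C) {ξ : Set Ω → ℝ} (hadd : AddOn C ξ)
    (π : Finset (Set Ω)) (hmem : ∀ E ∈ π, E ∈ C)
    (hdisj : (π : Set (Set Ω)).PairwiseDisjoint id) (h0 : ξ ∅ = 0) :
    ξ (⋃₀ (π : Set (Set Ω))) = ∑ E ∈ π, ξ E := by
  classical
  induction π using Finset.induction_on with
  | empty => simpa using h0
  | insert a s ha ih =>
      rw [Finset.coe_insert, Set.sUnion_insert, Finset.sum_insert ha]
      have hs : ⋃₀ (s : Set (Set Ω)) ∈ C :=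
        alg_sUnion hC s (fun E hE => hmem E (Finset.mem_insert_of_mem hE))
      have hd : Disjoint a (⋃₀ (s : Set (Set Ω))) := by
        rw [Set.disjoint_sUnion_right]
        intro E hE
        have hne : a ≠ E := by
          rintro rfl; exact ha (by exact_mod_cast hE)
        exact hdisj (Finset.mem_coe.2 (Finset.mem_insert_self a s))
          (Finset.mem_coe.2 (Finset.mem_insert_of_mem (by exact_mod_cast hE))) hne
      rw [hadd a (hmem a (Finset.mem_insert_self a s)) _ hs hd]
      congr 1
      exact ih (fun E hE => hmem E (Finset.mem_insert_of_mem hE))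
        (hdisj.subset (by simp [Set.subset_insert]))

lemma sum_of_partition (hC : IsSetAlg C) {ξ : Set Ω → ℝ} (hadd : AddOn C ξ)
    (h0 : ξ ∅ = 0) {π : Finset (Set Ω)} {S : Set Ω} (hπ : IsPartition C π S) :
    ξ S = ∑ E ∈ π, ξ E := by
  rw [← hπ.2.2]; exact sum_of_disjoint_fam hC hadd π hπ.1 hπ.2.1 h0

end CL
section CL2

variable {C : Set (Set Ω)} {μ : Set Ω → ℝ}

lemma varSums_nonneg {S : Set Ω} : ∀ x ∈ varSums C μ S, 0 ≤ x := by
  rintro x ⟨π, hπ, rfl⟩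
  exact Finset.sum_nonneg fun E _ => abs_nonneg _

lemma totalVar_nonneg (S : Set Ω) : 0 ≤ totalVar C μ S :=
  Real.sSup_nonneg varSums_nonneg

lemma singleton_partition (hC : IsSetAlg C) {A : Set Ω} (hA : A ∈ C) :
    IsPartition C ({A} : Finset (Set Ω)) A := by
  refine ⟨by simpa using hA, ?_, by simp⟩
  simp [Set.PairwiseDisjoint]

lemma varSums_nonempty (hC : IsSetAlg C) {A : Set Ω} (hA : A ∈ C) :
    (varSums C μ A).Nonempty :=
  ⟨|μ A|, ⟨{A}, singleton_partition hC hA, by simp⟩⟩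

lemma totalVar_empty (h0 : μ ∅ = 0) : totalVar C μ (∅ : Set Ω) = 0 := by
  have h : varSums C μ (∅ : Set Ω) ⊆ {x | x ≤ 0} := by
    rintro x ⟨π, ⟨hmem, hdisj, hun⟩, rfl⟩
    have : ∀ E ∈ π, |μ E| = 0 := by
      intro E hE
      have hEsub : E ⊆ ∅ := hun ▸ Set.subset_sUnion_of_mem (Finset.mem_coe.2 hE)
      have : E = ∅ := Set.subset_empty_iff.1 hEsub
      simp [this, h0]
    simp [Finset.sum_congr rfl this]
  refine le_antisymm ?_ (totalVar_nonneg _)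
  exact Real.sSup_le (fun x hx => h hx) le_rfl

/-- Any partial variation sum of a disjoint `C`-family is bounded by the sup over `univ`. -/
lemma sum_abs_le_tvNorm (hC : IsSetAlg C) (hfa : IsFinAdd C μ) (hBV : BddVar C μ)
    {π : Finset (Set Ω)} (hmem : ∀ E ∈ π, E ∈ C)
    (hdisj : (π : Set (Set Ω)).PairwiseDisjoint id) :
    ∑ E ∈ π, |μ E| ≤ sSup (varSums C μ univ) := by
  classical
  set S := ⋃₀ (π : Set (Set Ω)) with hS
  have hSC : S ∈ C := alg_sUnion hC π hmem
  by_cases hc : Sᶜ ∈ π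
  · -- then Sᶜ ⊆ S so Sᶜ = ∅, S = univ, π itself partitions univ
    have h1 : Sᶜ ⊆ S := hS ▸ Set.subset_sUnion_of_mem (Finset.mem_coe.2 hc)
    have h2 : S = univ := by
      rw [Set.eq_univ_iff_forall]
      intro x
      by_contra hx
      exact hx (h1 hx)
    refine le_csSup hBV ⟨π, ⟨hmem, hdisj, h2 ▸ rfl⟩, rfl⟩
  · have hpart : IsPartition C (insert Sᶜ π) univ := by
      refine ⟨?_, ?_, ?_⟩
      · intro E hE
        rcases Finset.mem_insert.1 hE with rfl | hE
        · exact alg_compl hC hSC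
        · exact hmem E hE
      · rw [Finset.coe_insert]
        refine hdisj.insert ?_
        intro E hE _
        have hEsub : E ⊆ S := hS ▸ Set.subset_sUnion_of_mem hE
        exact Set.disjoint_left.2 fun x hx hxE => hx (hEsub hxE)
      · rw [Finset.coe_insert, Set.sUnion_insert]
        exact Set.compl_union_self S
    have := le_csSup hBV ⟨insert Sᶜ π, hpart, rfl⟩
    rw [Finset.sum_insert hc] at this
    have := le_trans (le_add_of_nonneg_left (abs_nonneg (μ Sᶜ))) this
    exact this

lemma varSums_bddAbove (hC : IsSetAlg C) (hfa : IsFinAdd C μ) (hBV : BddVar C μ)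
    (S : Set Ω) : BddAbove (varSums C μ S) := by
  refine ⟨sSup (varSums C μ univ), ?_⟩
  rintro x ⟨π, ⟨hmem, hdisj, hun⟩, rfl⟩
  exact sum_abs_le_tvNorm hC hfa hBV hmem hdisj

/-- Remove the empty set from a partition. -/
lemma mem_varSums_no_empty {S : Set Ω} (h0 : μ ∅ = 0) {x : ℝ} (hx : x ∈ varSums C μ S) :
    ∃ π : Finset (Set Ω), IsPartition C π S ∧ (∅ : Set Ω) ∉ π ∧ x = ∑ E ∈ π, |μ E| := by
  classical
  obtain ⟨π, ⟨hmem, hdisj, hun⟩, rfl⟩ := hx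
  refine ⟨π.erase ∅, ⟨?_, ?_, ?_⟩, Finset.notMem_erase _ _, ?_⟩
  · intro E hE; exact hmem E (Finset.mem_of_mem_erase hE)
  · exact hdisj.subset (Finset.coe_subset.2 (Finset.erase_subset _ _))
  · rw [← hun]
    ext x
    simp only [Set.mem_sUnion, Finset.mem_coe, Finset.mem_erase]
    constructor
    · rintro ⟨E, ⟨_, hE⟩, hx⟩; exact ⟨E, hE, hx⟩
    · rintro ⟨E, hE, hx⟩
      refine ⟨E, ⟨?_, hE⟩, hx⟩
      rintro rfl; exact hx
  · exact (Finset.sum_erase π (by simp [h0])).symm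

end CL2
section CL3

variable {C : Set (Set Ω)} {μ : Set Ω → ℝ}

/-- Restriction of a partial sum to `T`. -/
lemma sum_inter_le_totalVar (hC : IsSetAlg C) (hfa : IsFinAdd C μ) (hBV : BddVar C μ)
    {T : Set Ω} (hT : T ∈ C) {π : Finset (Set Ω)} (hmem : ∀ E ∈ π, E ∈ C)
    (hdisj : (π : Set (Set Ω)).PairwiseDisjoint id) (hTsub : T ⊆ ⋃₀ (π : Set (Set Ω))) :
    ∑ E ∈ π, |μ (E ∩ T)| ≤ totalVar C μ T := by
  classical
  set π₂ : Finset (Set Ω) := π.filter (fun E => E ∩ T ≠ ∅) with hπ₂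
  have hsplit : ∑ E ∈ π, |μ (E ∩ T)| = ∑ E ∈ π₂, |μ (E ∩ T)| := by
    rw [hπ₂]
    rw [← Finset.sum_filter_add_sum_filter_not π (fun E => E ∩ T ≠ ∅) (fun E => |μ (E ∩ T)|)]
    have : ∑ E ∈ π.filter (fun E => ¬ E ∩ T ≠ ∅), |μ (E ∩ T)| = 0 := by
      refine Finset.sum_eq_zero ?_
      intro E hE
      have h1 : E ∩ T = ∅ := not_not.1 (Finset.mem_filter.1 hE).2
      simp [h1, hfa.1]
    rw [this, add_zero]
  have hinj : Set.InjOn (fun E => E ∩ T) π₂ := by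
    intro E hE E' hE' heq
    by_contra hne
    have hd := hdisj (Finset.mem_coe.2 (Finset.mem_filter.1 (Finset.mem_coe.1 hE)).1)
      (Finset.mem_coe.2 (Finset.mem_filter.1 (Finset.mem_coe.1 hE')).1) hne
    have h1 : (E ∩ T) ∩ (E' ∩ T) = ∅ := by
      have := Set.disjoint_iff_inter_eq_empty.1 hd
      have hsub : (E ∩ T) ∩ (E' ∩ T) ⊆ E ∩ E' := by
        intro x hx; exact ⟨hx.1.1, hx.2.1⟩
      rw [← Set.subset_empty_iff]
      exact this ▸ hsub
    have heq' : E ∩ T = E' ∩ T := heq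
    rw [heq', Set.inter_self] at h1
    exact (Finset.mem_filter.1 (Finset.mem_coe.1 hE')).2 h1
  set σ : Finset (Set Ω) := π₂.image (fun E => E ∩ T) with hσ
  have hsum2 : ∑ E ∈ π₂, |μ (E ∩ T)| = ∑ V ∈ σ, |μ V| := by
    rw [hσ, Finset.sum_image (fun E hE E' hE' h => hinj (Finset.mem_coe.2 hE) (Finset.mem_coe.2 hE') h)]
  have hpart : IsPartition C σ T := by
    refine ⟨?_, ?_, ?_⟩
    · intro V hV
      obtain ⟨E, hE, rfl⟩ := Finset.mem_image.1 hV
      exact alg_inter hC (hmem E (Finset.mem_filter.1 hE).1) hT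
    · intro V hV V' hV' hne
      obtain ⟨E, hE, rfl⟩ := Finset.mem_image.1 (Finset.mem_coe.1 hV)
      obtain ⟨E', hE', rfl⟩ := Finset.mem_image.1 (Finset.mem_coe.1 hV')
      have hEne : E ≠ E' := by rintro rfl; exact hne rfl
      have hd := hdisj (Finset.mem_coe.2 (Finset.mem_filter.1 hE).1)
        (Finset.mem_coe.2 (Finset.mem_filter.1 hE').1) hEne
      exact Set.disjoint_of_subset (Set.inter_subset_left) (Set.inter_subset_left) hd
    · apply Set.eq_of_subset_of_subset
      · intro x hx
        obtain ⟨V, hV, hxV⟩ := hx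
        obtain ⟨E, hE, rfl⟩ := Finset.mem_image.1 (Finset.mem_coe.1 hV)
        exact hxV.2
      · intro x hx
        obtain ⟨E, hE, hxE⟩ := hTsub hx
        exact ⟨E ∩ T, Finset.mem_coe.2 (Finset.mem_image.2 ⟨E,
          Finset.mem_filter.2 ⟨Finset.mem_coe.1 hE,
            Set.nonempty_iff_ne_empty.1 ⟨x, hxE, hx⟩⟩, rfl⟩), hxE, hx⟩
  rw [hsplit, hsum2]
  exact le_csSup (varSums_bddAbove hC hfa hBV T) ⟨σ, hpart, rfl⟩

lemma totalVar_union (hC : IsSetAlg C) (hfa : IsFinAdd C μ) (hBV : BddVar C μ)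
    {A B : Set Ω} (hA : A ∈ C) (hB : B ∈ C) (hd : Disjoint A B) :
    totalVar C μ (A ∪ B) = totalVar C μ A + totalVar C μ B := by
  classical
  refine le_antisymm ?_ ?_
  · -- ≤
    refine Real.sSup_le ?_ (add_nonneg (totalVar_nonneg A) (totalVar_nonneg B))
    rintro x ⟨π, ⟨hmem, hdisj, hun⟩, rfl⟩
    have hsub : ∀ E ∈ π, E ⊆ A ∪ B := by
      intro E hE
      exact hun ▸ Set.subset_sUnion_of_mem (Finset.mem_coe.2 hE)
    have key : ∀ E ∈ π, |μ E| ≤ |μ (E ∩ A)| + |μ (E ∩ B)| := by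
      intro E hE
      have hEC := hmem E hE
      have h1 : E = (E ∩ A) ∪ (E ∩ B) := by
        rw [← Set.inter_union_distrib_left]
        exact (Set.inter_eq_left.2 (hsub E hE)).symm
      have h2 : Disjoint (E ∩ A) (E ∩ B) :=
        Set.disjoint_of_subset Set.inter_subset_right Set.inter_subset_right hd
      have h3 := hfa.2 (E ∩ A) (alg_inter hC hEC hA) (E ∩ B) (alg_inter hC hEC hB) h2
      rw [← h1] at h3
      rw [h3]
      exact abs_add_le _ _
    calc ∑ E ∈ π, |μ E| ≤ ∑ E ∈ π, (|μ (E ∩ A)| + |μ (E ∩ B)|) := Finset.sum_le_sum key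
      _ = ∑ E ∈ π, |μ (E ∩ A)| + ∑ E ∈ π, |μ (E ∩ B)| := Finset.sum_add_distrib
      _ ≤ totalVar C μ A + totalVar C μ B := by
          have hAsub : A ⊆ ⋃₀ (π : Set (Set Ω)) := by rw [hun] ; exact Set.subset_union_left
          have hBsub : B ⊆ ⋃₀ (π : Set (Set Ω)) := by rw [hun] ; exact Set.subset_union_right
          exact add_le_add (sum_inter_le_totalVar hC hfa hBV hA hmem hdisj hAsub)
            (sum_inter_le_totalVar hC hfa hBV hB hmem hdisj hBsub)
  · -- ≥
    have hA' : totalVar C μ A ≤ totalVar C μ (A ∪ B) - totalVar C μ B := by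
      refine csSup_le (varSums_nonempty hC hA) ?_
      intro a ha
      obtain ⟨πa, hπa, hπa0, rfl⟩ := mem_varSums_no_empty hfa.1 ha
      have hb : totalVar C μ B ≤ totalVar C μ (A ∪ B) - ∑ E ∈ πa, |μ E| := by
        refine csSup_le (varSums_nonempty hC hB) ?_
        intro b hb
        obtain ⟨πb, hπb, hπb0, rfl⟩ := mem_varSums_no_empty hfa.1 hb
        rw [le_sub_iff_add_le]
        have hdisjf : Disjoint πa πb := by
          rw [Finset.disjoint_left]
          intro E hEa hEb
          have h1 : E ⊆ A := hπa.2.2 ▸ Set.subset_sUnion_of_mem (Finset.mem_coe.2 hEa)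
          have h2 : E ⊆ B := hπb.2.2 ▸ Set.subset_sUnion_of_mem (Finset.mem_coe.2 hEb)
          have : E = ∅ := by
            rw [← Set.subset_empty_iff]
            intro x hx
            exact (Set.disjoint_left.1 hd) (h1 hx) (h2 hx)
          exact hπa0 (this ▸ hEa)
        have hpartu : IsPartition C (πa ∪ πb) (A ∪ B) := by
          refine ⟨?_, ?_, ?_⟩
          · intro E hE
            rcases Finset.mem_union.1 hE with h | h
            · exact hπa.1 E h
            · exact hπb.1 E h
          · rw [Finset.coe_union]
            rw [Set.pairwiseDisjoint_union]
            refine ⟨hπa.2.1, hπb.2.1, ?_⟩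
            intro E hEa E' hEb _
            have h1 : E ⊆ A := hπa.2.2 ▸ Set.subset_sUnion_of_mem hEa
            have h2 : E' ⊆ B := hπb.2.2 ▸ Set.subset_sUnion_of_mem hEb
            exact Set.disjoint_of_subset h1 h2 hd
          · rw [Finset.coe_union, Set.sUnion_union, hπa.2.2, hπb.2.2]
        have hmemu : (∑ E ∈ πb, |μ E|) + (∑ E ∈ πa, |μ E|) ∈ varSums C μ (A ∪ B) := by
          refine ⟨πa ∪ πb, hpartu, ?_⟩
          rw [Finset.sum_union hdisjf]
          ring
        exact le_csSup (varSums_bddAbove hC hfa hBV (A ∪ B)) hmemu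
      linarith
    linarith

lemma totalVar_mono (hC : IsSetAlg C) (hfa : IsFinAdd C μ) (hBV : BddVar C μ)
    {A B : Set Ω} (hA : A ∈ C) (hB : B ∈ C) (hAB : A ⊆ B) :
    totalVar C μ A ≤ totalVar C μ B := by
  have h1 : B = A ∪ (B \ A) := (Set.union_diff_cancel hAB).symm
  have h2 := totalVar_union hC hfa hBV hA (alg_diff hC hB hA) disjoint_sdiff_right
  rw [← h1] at h2
  have := totalVar_nonneg (C := C) (μ := μ) (B \ A)
  linarith

lemma totalVar_addOn (hC : IsSetAlg C) (hfa : IsFinAdd C μ) (hBV : BddVar C μ) :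
    AddOn C (totalVar C μ) := fun A hA B hB hd => totalVar_union hC hfa hBV hA hB hd

end CL3
section CL4

variable {C : Set (Set Ω)} {l l' : Set Ω → ℝ}

lemma baInf_set_nonempty (hC : IsSetAlg C) (A : Set Ω) :
    {x | ∃ B ∈ C, x = l (A ∩ B) + l' (A ∩ Bᶜ)}.Nonempty :=
  ⟨l (A ∩ ∅) + l' (A ∩ ∅ᶜ), ⟨∅, hC.1, rfl⟩⟩

lemma baInf_set_bddBelow (hnn : ∀ S, 0 ≤ l S) (hnn' : ∀ S, 0 ≤ l' S) (A : Set Ω) :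
    BddBelow {x | ∃ B ∈ C, x = l (A ∩ B) + l' (A ∩ Bᶜ)} := by
  refine ⟨0, ?_⟩
  rintro x ⟨B, hB, rfl⟩
  exact add_nonneg (hnn _) (hnn' _)

lemma baInf_nonneg (hnn : ∀ S, 0 ≤ l S) (hnn' : ∀ S, 0 ≤ l' S) (A : Set Ω) :
    0 ≤ baInf C l l' A :=
  Real.sInf_nonneg (by rintro x ⟨B, hB, rfl⟩; exact add_nonneg (hnn _) (hnn' _))

lemma baInf_le_left (hC : IsSetAlg C) (hnn : ∀ S, 0 ≤ l S) (hnn' : ∀ S, 0 ≤ l' S)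
    (h0' : l' ∅ = 0) (A : Set Ω) : baInf C l l' A ≤ l A := by
  have hmem : l A ∈ {x | ∃ B ∈ C, x = l (A ∩ B) + l' (A ∩ Bᶜ)} := by
    refine ⟨univ, alg_univ hC, ?_⟩
    simp [h0']
  exact csInf_le (baInf_set_bddBelow hnn hnn' A) hmem

lemma baInf_le_right (hC : IsSetAlg C) (hnn : ∀ S, 0 ≤ l S) (hnn' : ∀ S, 0 ≤ l' S)
    (h0 : l ∅ = 0) (A : Set Ω) : baInf C l l' A ≤ l' A := by
  have hmem : l' A ∈ {x | ∃ B ∈ C, x = l (A ∩ B) + l' (A ∩ Bᶜ)} := by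
    refine ⟨∅, hC.1, ?_⟩
    simp [h0]
  exact csInf_le (baInf_set_bddBelow hnn hnn' A) hmem

lemma baInf_empty (hC : IsSetAlg C) (hnn : ∀ S, 0 ≤ l S) (hnn' : ∀ S, 0 ≤ l' S)
    (h0 : l ∅ = 0) (h0' : l' ∅ = 0) : baInf C l l' (∅ : Set Ω) = 0 :=
  le_antisymm (by simpa [h0'] using baInf_le_right hC hnn hnn' h0 (∅ : Set Ω))
    (baInf_nonneg hnn hnn' _)

lemma baInf_addOn (hC : IsSetAlg C) (hadd : AddOn C l) (hadd' : AddOn C l')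
    (hnn : ∀ S, 0 ≤ l S) (hnn' : ∀ S, 0 ≤ l' S) :
    AddOn C (baInf C l l') := by
  intro A hA A' hA' hd
  have hD := Set.disjoint_left.1 hd
  refine le_antisymm ?_ ?_
  · -- subadditive direction
    have key : ∀ x ∈ {x | ∃ B ∈ C, x = l (A ∩ B) + l' (A ∩ Bᶜ)},
        ∀ y ∈ {x | ∃ B ∈ C, x = l (A' ∩ B) + l' (A' ∩ Bᶜ)},
        baInf C l l' (A ∪ A') ≤ x + y := by
      rintro x ⟨B, hB, rfl⟩ y ⟨B', hB', rfl⟩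
      set B'' := (B ∩ A) ∪ (B' ∩ A') with hB''def
      have hB''C : B'' ∈ C := alg_union hC (alg_inter hC hB hA) (alg_inter hC hB' hA')
      have h1 : (A ∪ A') ∩ B'' = (A ∩ B) ∪ (A' ∩ B') := by
        ext z
        simp only [hB''def, Set.mem_inter_iff, Set.mem_union]
        tauto
      have h2 : (A ∪ A') ∩ B''ᶜ = (A ∩ Bᶜ) ∪ (A' ∩ B'ᶜ) := by
        ext z
        simp only [hB''def, Set.mem_inter_iff, Set.mem_union, Set.mem_compl_iff, not_or,
          Set.mem_inter_iff, not_and]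
        constructor
        · rintro ⟨hz1 | hz1, hz2, hz3⟩
          · exact Or.inl ⟨hz1, fun hB0 => (hz2 hB0) hz1⟩
          · exact Or.inr ⟨hz1, fun hB0 => (hz3 hB0) hz1⟩
        · rintro (⟨hz1, hz2⟩ | ⟨hz1, hz2⟩)
          · exact ⟨Or.inl hz1, fun hB0 => fun hzA => (hz2 hB0).elim,
              fun hB0 hzA' => (hD hz1 hzA').elim⟩
          · exact ⟨Or.inr hz1, fun hB0 hzA => (hD hzA hz1).elim,
              fun hB0 => fun hzA' => (hz2 hB0).elim⟩
      have hdl : Disjoint (A ∩ B) (A' ∩ B') :=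
        Set.disjoint_of_subset Set.inter_subset_left Set.inter_subset_left hd
      have hdr : Disjoint (A ∩ Bᶜ) (A' ∩ B'ᶜ) :=
        Set.disjoint_of_subset Set.inter_subset_left Set.inter_subset_left hd
      have hz : l ((A ∪ A') ∩ B'') + l' ((A ∪ A') ∩ B''ᶜ)
          = (l (A ∩ B) + l' (A ∩ Bᶜ)) + (l (A' ∩ B') + l' (A' ∩ B'ᶜ)) := by
        rw [h1, h2, hadd _ (alg_inter hC hA hB) _ (alg_inter hC hA' hB') hdl,
          hadd' _ (alg_inter hC hA (alg_compl hC hB)) _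
            (alg_inter hC hA' (alg_compl hC hB')) hdr]
        ring
      calc baInf C l l' (A ∪ A') ≤ l ((A ∪ A') ∩ B'') + l' ((A ∪ A') ∩ B''ᶜ) :=
            csInf_le (baInf_set_bddBelow hnn hnn' _) ⟨B'', hB''C, rfl⟩
        _ = _ := hz
    have h3 : ∀ x ∈ {x | ∃ B ∈ C, x = l (A ∩ B) + l' (A ∩ Bᶜ)},
        baInf C l l' (A ∪ A') - x ≤ baInf C l l' A' := by
      intro x hx
      refine le_csInf (baInf_set_nonempty hC A') ?_
      intro y hy
      linarith [key x hx y hy]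
    have h4 : baInf C l l' (A ∪ A') - baInf C l l' A' ≤ baInf C l l' A := by
      refine le_csInf (baInf_set_nonempty hC A) ?_
      intro x hx
      linarith [h3 x hx]
    linarith
  · -- superadditive direction
    refine le_csInf (baInf_set_nonempty hC _) ?_
    rintro z ⟨B, hB, rfl⟩
    have h1 : (A ∪ A') ∩ B = (A ∩ B) ∪ (A' ∩ B) := Set.union_inter_distrib_right A A' B
    have h2 : (A ∪ A') ∩ Bᶜ = (A ∩ Bᶜ) ∪ (A' ∩ Bᶜ) := Set.union_inter_distrib_right A A' Bᶜ
    have hdl : Disjoint (A ∩ B) (A' ∩ B) :=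
      Set.disjoint_of_subset Set.inter_subset_left Set.inter_subset_left hd
    have hdr : Disjoint (A ∩ Bᶜ) (A' ∩ Bᶜ) :=
      Set.disjoint_of_subset Set.inter_subset_left Set.inter_subset_left hd
    have e1 : l ((A ∪ A') ∩ B) = l (A ∩ B) + l (A' ∩ B) := by
      rw [h1]; exact hadd _ (alg_inter hC hA hB) _ (alg_inter hC hA' hB) hdl
    have e2 : l' ((A ∪ A') ∩ Bᶜ) = l' (A ∩ Bᶜ) + l' (A' ∩ Bᶜ) := by
      rw [h2]; exact hadd' _ (alg_inter hC hA (alg_compl hC hB)) _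
        (alg_inter hC hA' (alg_compl hC hB)) hdr
    have i1 : baInf C l l' A ≤ l (A ∩ B) + l' (A ∩ Bᶜ) :=
      csInf_le (baInf_set_bddBelow hnn hnn' _) ⟨B, hB, rfl⟩
    have i2 : baInf C l l' A' ≤ l (A' ∩ B) + l' (A' ∩ Bᶜ) :=
      csInf_le (baInf_set_bddBelow hnn hnn' _) ⟨B, hB, rfl⟩
    rw [e1, e2]
    linarith

/-- For a nonnegative additive set function, every partial variation sum over a
partition of `S ∈ C` equals `ξ S`, so `totalVar = ξ` on `C` (when `Ω` nonempty for
nonemptiness of partitions this is automatic since `{S}` is a partition). -/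
lemma totalVar_of_addOn (hC : IsSetAlg C) {ξ : Set Ω → ℝ} (haddx : AddOn C ξ)
    (hnn : ∀ A ∈ C, 0 ≤ ξ A) (h0 : ξ ∅ = 0) {S : Set Ω} (hS : S ∈ C) :
    totalVar C ξ S = ξ S := by
  have hvs : varSums C ξ S = {ξ S} := by
    apply Set.eq_of_subset_of_subset
    · rintro x ⟨π, hπ, rfl⟩
      have h1 : ∑ E ∈ π, |ξ E| = ∑ E ∈ π, ξ E := by
        refine Finset.sum_congr rfl ?_
        intro E hE
        exact abs_of_nonneg (hnn E (hπ.1 E hE))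
      have h2 := sum_of_partition hC haddx h0 hπ
      simp only [Set.mem_singleton_iff]
      rw [h1, ← h2]
    · rintro x rfl
      exact ⟨{S}, singleton_partition hC hS, by simp [abs_of_nonneg (hnn S hS)]⟩
  rw [totalVar, hvs, csSup_singleton]

end CL4
section CL5

variable {C : Set (Set Ω)} {l l' : Set Ω → ℝ}

open Classical in
/-- Limit along an ultrafilter. -/
noncomputable def ulim (U : Ultrafilter ℕ) (g : ℕ → ℝ) : ℝ :=
  if h : ∃ x, Tendsto g (U : Filter ℕ) (𝓝 x) then h.choose else 0

lemma ulim_spec {U : Ultrafilter ℕ} {g : ℕ → ℝ} (h : ∃ x, Tendsto g (U : Filter ℕ) (𝓝 x)) :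
    Tendsto g (U : Filter ℕ) (𝓝 (ulim U g)) := by
  classical
  rw [ulim]
  rw [dif_pos h]
  exact h.choose_spec

lemma exists_ulim_of_bdd (U : Ultrafilter ℕ) {g : ℕ → ℝ} {a b : ℝ}
    (hb : ∀ n, g n ∈ Set.Icc a b) : ∃ x, Tendsto g (U : Filter ℕ) (𝓝 x) := by
  have hcpt : IsCompact (Set.Icc a b) := isCompact_Icc
  have hle : (Ultrafilter.map g U : Filter ℝ) ≤ 𝓟 (Set.Icc a b) := by
    rw [Ultrafilter.coe_map, Filter.le_principal_iff, Filter.mem_map]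
    have : (g ⁻¹' Set.Icc a b) = univ := by
      ext n; simp [hb n]
    rw [this]
    exact Filter.univ_mem
  obtain ⟨x, _, hx⟩ := hcpt.ultrafilter_le_nhds (Ultrafilter.map g U) hle
  refine ⟨x, ?_⟩
  rwa [Filter.Tendsto, ← Ultrafilter.coe_map]

lemma ulim_eq {U : Ultrafilter ℕ} {g : ℕ → ℝ} {x : ℝ}
    (h : Tendsto g (U : Filter ℕ) (𝓝 x)) : ulim U g = x :=
  tendsto_nhds_unique (ulim_spec ⟨x, h⟩) h

lemma ulim_le {U : Ultrafilter ℕ} {g : ℕ → ℝ} {c : ℝ}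
    (h : ∃ x, Tendsto g (U : Filter ℕ) (𝓝 x)) (hle : {n | g n ≤ c} ∈ U) :
    ulim U g ≤ c :=
  le_of_tendsto (ulim_spec h) hle

lemma le_ulim {U : Ultrafilter ℕ} {g : ℕ → ℝ} {c : ℝ}
    (h : ∃ x, Tendsto g (U : Filter ℕ) (𝓝 x)) (hle : {n | c ≤ g n} ∈ U) :
    c ≤ ulim U g :=
  ge_of_tendsto (ulim_spec h) hle

lemma ulim_lt_mem {U : Ultrafilter ℕ} {g : ℕ → ℝ} {c : ℝ}
    (h : ∃ x, Tendsto g (U : Filter ℕ) (𝓝 x)) (hlt : c < ulim U g) :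
    {n | c < g n} ∈ U := by
  have := (ulim_spec h) (Ioi_mem_nhds hlt)
  exact this

-- outer measure basics
lemma outerM_set_nonempty (hC : IsSetAlg C) (B : Set Ω) :
    {x | ∃ A ∈ C, B ⊆ A ∧ x = l A}.Nonempty :=
  ⟨l univ, univ, alg_univ hC, Set.subset_univ B, rfl⟩

lemma outerM_bddBelow (hnnC : ∀ A ∈ C, 0 ≤ l A) (B : Set Ω) :
    BddBelow {x | ∃ A ∈ C, B ⊆ A ∧ x = l A} := by
  refine ⟨0, ?_⟩
  rintro x ⟨A, hA, _, rfl⟩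
  exact hnnC A hA

lemma outerM_nonneg (hnnC : ∀ A ∈ C, 0 ≤ l A) (B : Set Ω) : 0 ≤ outerM C l B :=
  Real.sInf_nonneg (by rintro x ⟨A, hA, _, rfl⟩; exact hnnC A hA)

lemma outerM_le_of_cover (hnnC : ∀ A ∈ C, 0 ≤ l A) {A B : Set Ω} (hA : A ∈ C)
    (hBA : B ⊆ A) : outerM C l B ≤ l A :=
  csInf_le (outerM_bddBelow hnnC B) ⟨A, hA, hBA, rfl⟩

lemma outerM_mono (hC : IsSetAlg C) (hnnC : ∀ A ∈ C, 0 ≤ l A) {B B' : Set Ω}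
    (h : B ⊆ B') : outerM C l B ≤ outerM C l B' := by
  refine le_csInf (outerM_set_nonempty hC B') ?_
  rintro x ⟨A, hA, hsub, rfl⟩
  exact outerM_le_of_cover hnnC hA (h.trans hsub)

lemma outerM_le_outerM (hC : IsSetAlg C) (hnnC : ∀ A ∈ C, 0 ≤ l A)
    (hll' : ∀ A ∈ C, l A ≤ l' A) (B : Set Ω) : outerM C l B ≤ outerM C l' B := by
  refine le_csInf (outerM_set_nonempty hC B) ?_
  rintro x ⟨A, hA, hsub, rfl⟩
  exact (outerM_le_of_cover hnnC hA hsub).trans (hll' A hA)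

lemma exists_cover_of_outerM_lt (hC : IsSetAlg C) {B : Set Ω} {c : ℝ}
    (h : outerM C l B < c) : ∃ A ∈ C, B ⊆ A ∧ l A < c := by
  obtain ⟨x, hx, hxc⟩ := exists_lt_of_csInf_lt (outerM_set_nonempty hC B) h
  obtain ⟨A, hA, hsub, rfl⟩ := hx
  exact ⟨A, hA, hsub, hxc⟩

end CL5
section CL6

variable {C : Set (Set Ω)}

open Classical in
/-- Patch together simple functions along a priority list: use `h i` outside `B i`. -/
noncomputable def patch (h : ℕ → Ω → ℝ) (B : ℕ → Set Ω) : List ℕ → Ω → ℝ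
  | [] => fun _ => 0
  | i :: rest => fun ω => if ω ∈ B i then patch h B rest ω else h i ω

lemma patch_simple (hC : IsSetAlg C) (h : ℕ → Ω → ℝ) (B : ℕ → Set Ω) :
    ∀ L : List ℕ, (∀ i ∈ L, IsSimpleFn C (h i)) → (∀ i ∈ L, B i ∈ C) →
    IsSimpleFn C (patch h B L) := by
  classical
  intro L
  induction L with
  | nil =>
      intro _ _
      constructor
      · exact (Set.finite_singleton (0:ℝ)).subset (by rintro x ⟨ω, rfl⟩; simp [patch])
      · intro c
        by_cases hc : (0:ℝ) = c
        · have : {ω : Ω | patch h B [] ω = c} = univ := by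
            ext ω; simp [patch, hc]
          rw [this]; exact alg_univ hC
        · have : {ω : Ω | patch h B [] ω = c} = ∅ := by
            ext ω; simp [patch, hc]
          rw [this]; exact hC.1
  | cons i rest ih =>
      intro hsimp hBC
      have hsi := hsimp i (List.mem_cons_self)
      have hBi := hBC i (List.mem_cons_self)
      have ihs := ih (fun j hj => hsimp j (List.mem_cons_of_mem i hj))
        (fun j hj => hBC j (List.mem_cons_of_mem i hj))
      constructor
      · refine (ihs.1.union hsi.1).subset ?_
        rintro x ⟨ω, rfl⟩
        by_cases hm : ω ∈ B i
        · exact Or.inl ⟨ω, by simp [patch, hm]⟩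
        · exact Or.inr ⟨ω, by simp [patch, hm]⟩
      · intro c
        have : {ω | patch h B (i :: rest) ω = c}
            = (B i ∩ {ω | patch h B rest ω = c}) ∪ ((B i)ᶜ ∩ {ω | h i ω = c}) := by
          ext ω
          by_cases hm : ω ∈ B i <;> simp [patch, hm]
        rw [this]
        exact alg_union hC (alg_inter hC hBi (ihs.2 c))
          (alg_inter hC (alg_compl hC hBi) (hsi.2 c))

lemma patch_bad {C : Set (Set Ω)} (f : Ω → ℝ) (h : ℕ → Ω → ℝ) (B : ℕ → Set Ω)
    {ε a : ℝ} (hεa : a ≤ ε) :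
    ∀ L : List ℕ, (∀ i ∈ L, {ω | a < |f ω - h i ω|} ⊆ B i) →
    ∀ ω, ε < |f ω - patch h B L ω| → ∀ i ∈ L, ω ∈ B i := by
  classical
  intro L
  induction L with
  | nil => intro _ ω _ i hi; exact absurd hi List.not_mem_nil
  | cons i rest ih =>
      intro hcov ω hbad j hj
      by_cases hm : ω ∈ B i
      · have hpl : patch h B (i :: rest) ω = patch h B rest ω := by simp [patch, hm]
        rw [hpl] at hbad
        rcases List.mem_cons.1 hj with rfl | hj'
        · exact hm
        · exact ih (fun k hk => hcov k (List.mem_cons_of_mem i hk)) ω hbad j hj'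
      · exfalso
        have hpl : patch h B (i :: rest) ω = h i ω := by simp [patch, hm]
        rw [hpl] at hbad
        exact hm (hcov i (List.mem_cons_self) (lt_of_le_of_lt hεa hbad))

/-- The key exhaustion lemma. -/
lemma lemmaG (hC : IsSetAlg C) {lk : Set Ω → ℝ} (hlkadd : AddOn C lk)
    (hlknn : ∀ A ∈ C, 0 ≤ lk A)
    {ν : ℕ → Set Ω → ℝ} (hνadd : ∀ n, AddOn C (ν n)) (hνnn : ∀ n, ∀ A ∈ C, 0 ≤ ν n A)
    (hνlk : ∀ n, ∀ A ∈ C, ν n A ≤ lk A)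
    {U : Ultrafilter ℕ} {lam : Set Ω → ℝ}
    (hlam : ∀ A ∈ C, Tendsto (fun n => ν n A) (U : Filter ℕ) (𝓝 (lam A)))
    {W : Set ℕ} (hW : W ∈ U) {B : ℕ → Set Ω} (hBC : ∀ i ∈ W, B i ∈ C)
    {β : ℝ} (hβ : 0 ≤ β) (hBsmall : ∀ i ∈ W, ν i (B i) < β)
    {c : ℝ} (hc : 2 * β < c) :
    ∃ F : Finset ℕ, (F : Set ℕ) ⊆ W ∧ lam (⋂ i ∈ F, B i) < c := by
  classical
  by_contra hcon
  push_neg at hcon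
  have hpos : 0 < c / 2 - β := by linarith
  have hstep : ∀ F : Finset ℕ, (F : Set ℕ) ⊆ W →
      ∃ n ∈ W, lk (⋂ i ∈ insert n F, B i) ≤ lk (⋂ i ∈ F, B i) - (c / 2 - β) := by
    intro F hF
    set D := ⋂ i ∈ F, B i with hD
    have hDC : D ∈ C := alg_biInter hC F B (fun i hi => hBC i (hF hi))
    have hlamD : c ≤ lam D := hcon F hF
    have hmemU : {n | c / 2 < ν n D} ∈ U := by
      have := (hlam D hDC) (Ioi_mem_nhds (show c / 2 < lam D by linarith))
      exact this
    obtain ⟨n, hnW, hngt⟩ : ∃ n, n ∈ W ∧ c / 2 < ν n D := by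
      have hmem2 : (W ∩ {n | c / 2 < ν n D}) ∈ U := Filter.inter_mem hW hmemU
      obtain ⟨n, hn⟩ := Filter.nonempty_of_mem hmem2
      exact ⟨n, hn.1, hn.2⟩
    refine ⟨n, hnW, ?_⟩
    have hBnC : B n ∈ C := hBC n hnW
    have hsplit : ν n D = ν n (D ∩ B n) + ν n (D \ B n) := by
      have h1 : D = (D ∩ B n) ∪ (D \ B n) := (Set.inter_union_diff D (B n)).symm
      have h2 := hνadd n (D ∩ B n) (alg_inter hC hDC hBnC) (D \ B n)
        (alg_diff hC hDC hBnC) (Set.disjoint_of_subset_left Set.inter_subset_right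
          disjoint_sdiff_right)
      rw [← h1] at h2
      exact h2
    have hmono : ν n (D ∩ B n) ≤ ν n (B n) :=
      mono_of_addOn hC (hνadd n) (hνnn n) (alg_inter hC hDC hBnC) hBnC
        Set.inter_subset_right
    have hν_diff : c / 2 - β < ν n (D \ B n) := by
      have := hBsmall n hnW
      linarith
    have hlk_diff : c / 2 - β < lk (D \ B n) :=
      lt_of_lt_of_le hν_diff (hνlk n _ (alg_diff hC hDC hBnC))
    have hlksplit : lk D = lk (D ∩ B n) + lk (D \ B n) := by
      have h1 : D = (D ∩ B n) ∪ (D \ B n) := (Set.inter_union_diff D (B n)).symm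
      have h2 := hlkadd (D ∩ B n) (alg_inter hC hDC hBnC) (D \ B n)
        (alg_diff hC hDC hBnC) (Set.disjoint_of_subset_left Set.inter_subset_right
          disjoint_sdiff_right)
      rw [← h1] at h2
      exact h2
    have hIns : (⋂ i ∈ insert n F, B i) = B n ∩ D := by
      rw [Finset.set_biInter_insert]
    rw [hIns, Set.inter_comm]
    linarith
  have hiter : ∀ r : ℕ, ∃ F : Finset ℕ, (F : Set ℕ) ⊆ W ∧
      lk (⋂ i ∈ F, B i) ≤ lk univ - r * (c / 2 - β) := by
    intro r
    induction r with
    | zero => exact ⟨∅, by simp, by simp⟩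
    | succ r ih =>
        obtain ⟨F, hF, hFle⟩ := ih
        obtain ⟨n, hnW, hle⟩ := hstep F hF
        refine ⟨insert n F, ?_, ?_⟩
        · rw [Finset.coe_insert]
          exact Set.insert_subset hnW hF
        · push_cast
          linarith
  obtain ⟨r, hr⟩ := exists_nat_gt (lk univ / (c / 2 - β))
  obtain ⟨F, hF, hFle⟩ := hiter r
  have h1 : lk univ < r * (c / 2 - β) := by
    rw [div_lt_iff₀ hpos] at hr
    linarith
  have h2 : lk (⋂ i ∈ F, B i) < 0 := by linarith
  exact absurd h2 (not_lt.2 (hlknn _ (alg_biInter hC F B (fun i hi => hBC i (hF hi)))))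

end CL6
section CL7

variable {C : Set (Set Ω)}

lemma measurability_aux (hC : IsSetAlg C)
    {lk : Set Ω → ℝ} (hlkadd : AddOn C lk) (hlknn : ∀ A ∈ C, 0 ≤ lk A)
    {l : ℕ → Set Ω → ℝ}
    {ν : ℕ → Set Ω → ℝ} (hνadd : ∀ n, AddOn C (ν n)) (hνnn : ∀ n, ∀ A ∈ C, 0 ≤ ν n A)
    (hνlk : ∀ n, ∀ A ∈ C, ν n A ≤ lk A) (hνl : ∀ n, ∀ A ∈ C, ν n A ≤ l n A)
    {U : Ultrafilter ℕ} (hUtail : ∀ j : ℕ, {i | j ≤ i} ∈ U)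
    {lam : Set Ω → ℝ} (hlam : ∀ A ∈ C, Tendsto (fun n => ν n A) (U : Filter ℕ) (𝓝 (lam A)))
    {q : ℝ} (hq : 0 < q)
    {m : Set Ω → ℝ} (hm : ∀ A ∈ C, m A = lam A / q) (hmnn : ∀ A ∈ C, 0 ≤ m A)
    {f : Ω → ℝ} {j₀ : ℕ}
    (hmeas : ∀ i, j₀ ≤ i → FAMeasurable C (l i) f) :
    FAMeasurable C m f := by
  classical
  intro ε hε
  set a := min ε (ε * q / 8) with ha_def
  have ha : 0 < a := lt_min hε (by positivity)
  have hcov : ∀ i : ℕ, ∃ h_ : Ω → ℝ, ∃ B_ : Set Ω,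
      (j₀ ≤ i → IsSimpleFn C h_ ∧ B_ ∈ C ∧ {ω | a < |f ω - h_ ω|} ⊆ B_ ∧ l i B_ < a) := by
    intro i
    by_cases hi : j₀ ≤ i
    · obtain ⟨h_, hsimp, hout⟩ := hmeas i hi a ha
      obtain ⟨A, hA, hsub, hlt⟩ := exists_cover_of_outerM_lt hC hout
      exact ⟨h_, A, fun _ => ⟨hsimp, hA, hsub, hlt⟩⟩
    · exact ⟨fun _ => 0, univ, fun h => absurd h hi⟩
  choose hfn Bfn hprops using hcov
  have hW : {i | j₀ ≤ i} ∈ U := hUtail j₀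
  have hc2 : 2 * a < ε * q / 2 := by
    have h1 : a ≤ ε * q / 8 := min_le_right _ _
    have h2 : 0 < ε * q := by positivity
    linarith
  obtain ⟨F, hFW, hlamF⟩ := lemmaG hC hlkadd hlknn hνadd hνnn hνlk hlam hW
    (B := Bfn) (fun i hi => (hprops i hi).2.1) (β := a) (le_of_lt ha)
    (fun i hi => lt_of_le_of_lt (hνl i _ (hprops i hi).2.1) (hprops i hi).2.2.2)
    (c := ε * q / 2) hc2
  refine ⟨patch hfn Bfn F.toList, ?_, ?_⟩
  · refine patch_simple hC _ _ _ ?_ ?_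
    · intro i hi
      exact (hprops i (hFW (Finset.mem_toList.1 hi))).1
    · intro i hi
      exact (hprops i (hFW (Finset.mem_toList.1 hi))).2.1
  · have hbad : {ω | ε < |f ω - patch hfn Bfn F.toList ω|} ⊆ ⋂ i ∈ F, Bfn i := by
      intro ω hω
      have := patch_bad (C := C) f hfn Bfn (min_le_left ε (ε * q / 8)) F.toList
        (fun i hi => (hprops i (hFW (Finset.mem_toList.1 hi))).2.2.1) ω hω
      exact Set.mem_iInter₂.2 fun i hi => this i (Finset.mem_toList.2 hi)
    have hDC : (⋂ i ∈ F, Bfn i) ∈ C :=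
      alg_biInter hC F Bfn (fun i hi => (hprops i (hFW hi)).2.1)
    calc outerM C m {ω | ε < |f ω - patch hfn Bfn F.toList ω|}
        ≤ m (⋂ i ∈ F, Bfn i) := outerM_le_of_cover hmnn hDC hbad
      _ = lam (⋂ i ∈ F, Bfn i) / q := hm _ hDC
      _ < ε := by
          rw [div_lt_iff₀ hq]
          have : 0 < ε * q := by positivity
          linarith

lemma integrability_aux (hC : IsSetAlg C)
    {lk : Set Ω → ℝ} (hlkadd : AddOn C lk) (hlknn : ∀ A ∈ C, 0 ≤ lk A)
    {l : ℕ → Set Ω → ℝ} (hlnn : ∀ n, ∀ A ∈ C, 0 ≤ l n A)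
    {ν : ℕ → Set Ω → ℝ} (hνadd : ∀ n, AddOn C (ν n)) (hνnn : ∀ n, ∀ A ∈ C, 0 ≤ ν n A)
    (hνlk : ∀ n, ∀ A ∈ C, ν n A ≤ lk A) (hνl : ∀ n, ∀ A ∈ C, ν n A ≤ l n A)
    {U : Ultrafilter ℕ}
    {lam : Set Ω → ℝ} (hlam : ∀ A ∈ C, Tendsto (fun n => ν n A) (U : Filter ℕ) (𝓝 (lam A)))
    {q : ℝ} (hq : 0 < q) (hmuniv : lam univ = q)
    {m : Set Ω → ℝ} (hm : ∀ A ∈ C, m A = lam A / q) (hmnn : ∀ A ∈ C, 0 ≤ m A)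
    {f : Ω → ℝ} {bE : ℝ≥0∞} (hbE : bE ≠ ⊤)
    (hWb : {i | faL1 C (l i) f ≤ bE} ∈ U) :
    faL1 C m f < ⊤ := by
  classical
  set b := bE.toReal with hb_def
  set Mk := lk univ with hMk_def
  set T : ℕ → Set Ω := fun s => {ω | (2:ℝ)^(s+1) < |f ω|} with hT_def
  set out : ℕ → ℕ → ℝ := fun i s => outerM C (ν i) (T s) with hout_def
  have hout_mem : ∀ i s, out i s ∈ Set.Icc 0 Mk := by
    intro i s
    constructor
    · exact outerM_nonneg (hνnn i) _
    · exact le_trans (outerM_le_of_cover (hνnn i) (alg_univ hC) (Set.subset_univ _))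
        (hνlk i _ (alg_univ hC))
  set L : ℕ → ℝ := fun s => ulim U (fun i => out i s) with hL_def
  have hLex : ∀ s, ∃ x, Tendsto (fun i => out i s) (U : Filter ℕ) (𝓝 x) :=
    fun s => exists_ulim_of_bdd U (fun i => hout_mem i s)
  have hLtend : ∀ s, Tendsto (fun i => out i s) (U : Filter ℕ) (𝓝 (L s)) :=
    fun s => ulim_spec (hLex s)
  have hLnn : ∀ s, 0 ≤ L s := by
    intro s
    exact le_ulim (hLex s) (by
      have : {n : ℕ | 0 ≤ out n s} = univ := by
        ext n; simp [(hout_mem n s).1]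
      rw [this]; exact Filter.univ_mem)
  -- KEY1
  have key1 : ∀ s, outerM C m (T s) ≤ 2 * L s / q := by
    intro s
    refine le_of_forall_pos_le_add ?_
    intro θ hθ
    have hθq : 0 < θ * q := by positivity
    have hW₁ : {i | out i s < L s + θ * q / 8} ∈ U := by
      have := (hLtend s) (Iio_mem_nhds (show L s < L s + θ * q / 8 by linarith))
      exact this
    have hcov2 : ∀ i : ℕ, ∃ B_ : Set Ω,
        (i ∈ {i | out i s < L s + θ * q / 8} → B_ ∈ C ∧ T s ⊆ B_ ∧ ν i B_ < L s + θ * q / 8) := by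
      intro i
      by_cases hi : out i s < L s + θ * q / 8
      · obtain ⟨A, hA, hsub, hlt⟩ := exists_cover_of_outerM_lt hC hi
        exact ⟨A, fun _ => ⟨hA, hsub, hlt⟩⟩
      · exact ⟨univ, fun h => absurd h hi⟩
    choose Bfn2 hp2 using hcov2
    have hc2 : 2 * (L s + θ * q / 8) < 2 * L s + θ * q / 2 := by linarith
    obtain ⟨F, hFW, hlamF⟩ := lemmaG hC hlkadd hlknn hνadd hνnn hνlk hlam hW₁
      (B := Bfn2) (fun i hi => (hp2 i hi).1) (β := L s + θ * q / 8)
      (add_nonneg (hLnn s) (by positivity))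
      (fun i hi => (hp2 i hi).2.2) (c := 2 * L s + θ * q / 2) hc2
    have hTsub : T s ⊆ ⋂ i ∈ F, Bfn2 i := by
      intro ω hω
      exact Set.mem_iInter₂.2 fun i hi => (hp2 i (hFW hi)).2.1 hω
    have hDC : (⋂ i ∈ F, Bfn2 i) ∈ C :=
      alg_biInter hC F Bfn2 (fun i hi => (hp2 i (hFW hi)).1)
    calc outerM C m (T s) ≤ m (⋂ i ∈ F, Bfn2 i) := outerM_le_of_cover hmnn hDC hTsub
      _ = lam (⋂ i ∈ F, Bfn2 i) / q := hm _ hDC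
      _ ≤ 2 * L s / q + θ := by
          rw [div_le_iff₀ hq]
          have h3 : 2 * L s / q * q = 2 * L s := by field_simp
          nlinarith [hlamF]
  -- KEY2
  have key2 : ∀ R : ℕ, ∑ s ∈ Finset.range R, (2:ℝ)^s * L s ≤ b := by
    intro R
    have hper : ∀ i ∈ {i | faL1 C (l i) f ≤ bE},
        ∑ s ∈ Finset.range R, (2:ℝ)^s * out i s ≤ b := by
      intro i hi
      have hpieces : ∀ s : ℕ, ENNReal.ofReal (out i s) * ENNReal.ofReal ((2:ℝ)^s)
          ≤ ∫⁻ t in Ioc ((2:ℝ)^s) ((2:ℝ)^(s+1)),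
              ENNReal.ofReal (outerM C (l i) {ω | t < |f ω|}) := by
        intro s
        have hvol : (MeasureTheory.volume (Ioc ((2:ℝ)^s) ((2:ℝ)^(s+1)))) = ENNReal.ofReal ((2:ℝ)^s) := by
          rw [Real.volume_Ioc]
          congr 1
          have : (2:ℝ)^(s+1) = 2 * 2^s := by ring
          rw [this]; ring
        have hlow : ∀ t ∈ Ioc ((2:ℝ)^s) ((2:ℝ)^(s+1)),
            ENNReal.ofReal (out i s) ≤ ENNReal.ofReal (outerM C (l i) {ω | t < |f ω|}) := by
          intro t ht
          refine ENNReal.ofReal_le_ofReal ?_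
          have h1 : out i s ≤ outerM C (l i) (T s) :=
            outerM_le_outerM hC (hνnn i) (hνl i) _
          have h2 : T s ⊆ {ω | t < |f ω|} := by
            intro ω hω
            exact lt_of_le_of_lt ht.2 hω
          exact h1.trans (outerM_mono hC (hlnn i) h2)
        calc ENNReal.ofReal (out i s) * ENNReal.ofReal ((2:ℝ)^s)
            = ∫⁻ _ in Ioc ((2:ℝ)^s) ((2:ℝ)^(s+1)), ENNReal.ofReal (out i s) := by
              rw [MeasureTheory.setLIntegral_const, hvol]
          _ ≤ _ := MeasureTheory.setLIntegral_mono' measurableSet_Ioc hlow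
      have hdisj : Set.PairwiseDisjoint (↑(Finset.range R))
          (fun s : ℕ => Ioc ((2:ℝ)^s) ((2:ℝ)^(s+1))) := by
        intro s _ s' _ hne
        have key : ∀ u v : ℕ, u < v →
            Disjoint (Ioc ((2:ℝ)^u) ((2:ℝ)^(u+1))) (Ioc ((2:ℝ)^v) ((2:ℝ)^(v+1))) := by
          intro u v huv
          rw [Set.Ioc_disjoint_Ioc]
          have : (2:ℝ)^(u+1) ≤ (2:ℝ)^v :=
            pow_le_pow_right₀ (by norm_num) huv
          calc min ((2:ℝ)^(u+1)) ((2:ℝ)^(v+1)) ≤ (2:ℝ)^(u+1) := min_le_left _ _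
            _ ≤ (2:ℝ)^v := this
            _ ≤ max ((2:ℝ)^u) ((2:ℝ)^v) := le_max_right _ _
        rcases lt_or_gt_of_ne hne with h | h
        · exact key s s' h
        · exact (key s' s h).symm
      have hsum : ∑ s ∈ Finset.range R, ENNReal.ofReal (out i s) * ENNReal.ofReal ((2:ℝ)^s)
          ≤ faL1 C (l i) f := by
        calc ∑ s ∈ Finset.range R, ENNReal.ofReal (out i s) * ENNReal.ofReal ((2:ℝ)^s)
            ≤ ∑ s ∈ Finset.range R, ∫⁻ t in Ioc ((2:ℝ)^s) ((2:ℝ)^(s+1)),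
                ENNReal.ofReal (outerM C (l i) {ω | t < |f ω|}) :=
              Finset.sum_le_sum (fun s _ => hpieces s)
          _ = ∫⁻ t in ⋃ s ∈ Finset.range R, Ioc ((2:ℝ)^s) ((2:ℝ)^(s+1)),
                ENNReal.ofReal (outerM C (l i) {ω | t < |f ω|}) :=
              (MeasureTheory.lintegral_biUnion_finset hdisj
                (fun s _ => measurableSet_Ioc) _).symm
          _ ≤ ∫⁻ t in Ioi (0:ℝ), ENNReal.ofReal (outerM C (l i) {ω | t < |f ω|}) := by
              refine MeasureTheory.lintegral_mono_set ?_
              intro t ht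
              simp only [Set.mem_iUnion] at ht
              obtain ⟨s, _, hts⟩ := ht
              exact lt_trans (by positivity) hts.1
          _ = faL1 C (l i) f := rfl
      have hent : ENNReal.ofReal (∑ s ∈ Finset.range R, (2:ℝ)^s * out i s) ≤ bE := by
        rw [ENNReal.ofReal_sum_of_nonneg (fun s _ =>
          mul_nonneg (by positivity) (hout_mem i s).1)]
        refine le_trans ?_ (le_trans hsum hi)
        refine le_of_eq ?_
        refine Finset.sum_congr rfl ?_
        intro s _
        rw [ENNReal.ofReal_mul (by positivity)]
        ring
      have := ENNReal.ofReal_le_iff_le_toReal hbE |>.1 hent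
      exact this
    have htend : Tendsto (fun i => ∑ s ∈ Finset.range R, (2:ℝ)^s * out i s)
        (U : Filter ℕ) (𝓝 (∑ s ∈ Finset.range R, (2:ℝ)^s * L s)) := by
      refine tendsto_finset_sum _ ?_
      intro s _
      exact (hLtend s).const_mul _
    exact le_of_tendsto htend (Filter.mem_of_superset hWb hper)
  -- Assembly
  have hb_nn : 0 ≤ b := ENNReal.toReal_nonneg
  have hcover : Ioi (0:ℝ) ⊆ Ioc (0:ℝ) 2 ∪ ⋃ s : ℕ, Ioc ((2:ℝ)^(s+1)) ((2:ℝ)^(s+2)) := by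
    intro t ht
    by_cases h2 : t ≤ 2
    · exact Or.inl ⟨ht, h2⟩
    · right
      push_neg at h2
      have hex : ∃ n : ℕ, t ≤ 2^(n+1) := by
        obtain ⟨n, hn⟩ := pow_unbounded_of_one_lt t (by norm_num : (1:ℝ) < 2)
        exact ⟨n, le_of_lt (lt_of_lt_of_le hn (pow_le_pow_right₀ (by norm_num) (Nat.le_succ n)))⟩
      have hn₀ := Nat.find_spec hex
      have hne : Nat.find hex ≠ 0 := by
        intro h0
        rw [h0] at hn₀
        norm_num at hn₀
        linarith
      obtain ⟨s, hs⟩ := Nat.exists_eq_succ_of_ne_zero hne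
      refine Set.mem_iUnion.2 ⟨s, ?_, ?_⟩
      · have := Nat.find_min hex (by rw [hs]; exact Nat.lt_succ_self s)
        push_neg at this
        exact this
      · rw [hs] at hn₀
        exact hn₀
  have hm_univ : m univ = 1 := by
    rw [hm univ (alg_univ hC), hmuniv]
    exact div_self (ne_of_gt hq)
  have hm_le_one : ∀ B : Set Ω, outerM C m B ≤ 1 := by
    intro B
    have := outerM_le_of_cover hmnn (alg_univ hC) (Set.subset_univ B)
    rwa [hm_univ] at this
  have hdisj2 : Disjoint (Ioc (0:ℝ) 2) (⋃ s : ℕ, Ioc ((2:ℝ)^(s+1)) ((2:ℝ)^(s+2))) := by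
    rw [Set.disjoint_left]
    intro t ht hts
    simp only [Set.mem_iUnion] at hts
    obtain ⟨s, hs1, _⟩ := hts
    have h2 : (2:ℝ) ≤ 2^(s+1) := by
      calc (2:ℝ) = 2^1 := (pow_one 2).symm
        _ ≤ 2^(s+1) := pow_le_pow_right₀ (by norm_num) (Nat.le_add_left 1 s)
    exact absurd ht.2 (not_le.2 (lt_of_le_of_lt h2 hs1))
  have hmeas2 : MeasurableSet (⋃ s : ℕ, Ioc ((2:ℝ)^(s+1)) ((2:ℝ)^(s+2))) :=
    MeasurableSet.iUnion (fun s => measurableSet_Ioc)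
  have hfirst : ∫⁻ t in Ioc (0:ℝ) 2, ENNReal.ofReal (outerM C m {ω | t < |f ω|})
      ≤ ENNReal.ofReal 2 := by
    calc ∫⁻ t in Ioc (0:ℝ) 2, ENNReal.ofReal (outerM C m {ω | t < |f ω|})
        ≤ ∫⁻ _ in Ioc (0:ℝ) 2, (1 : ℝ≥0∞) := by
          refine MeasureTheory.setLIntegral_mono measurable_const ?_
          intro t _
          calc ENNReal.ofReal (outerM C m {ω | t < |f ω|})
              ≤ ENNReal.ofReal 1 := ENNReal.ofReal_le_ofReal (hm_le_one _)
            _ = 1 := ENNReal.ofReal_one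
      _ = ENNReal.ofReal 2 := by
          rw [MeasureTheory.setLIntegral_const, Real.volume_Ioc, one_mul, sub_zero]
  have hpiece2 : ∀ s : ℕ, ∫⁻ t in Ioc ((2:ℝ)^(s+1)) ((2:ℝ)^(s+2)),
      ENNReal.ofReal (outerM C m {ω | t < |f ω|})
      ≤ ENNReal.ofReal ((2 * L s / q) * 2^(s+1)) := by
    intro s
    have hub : ∀ t ∈ Ioc ((2:ℝ)^(s+1)) ((2:ℝ)^(s+2)),
        ENNReal.ofReal (outerM C m {ω | t < |f ω|}) ≤ ENNReal.ofReal (2 * L s / q) := by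
      intro t ht
      refine ENNReal.ofReal_le_ofReal ?_
      have hsub : {ω | t < |f ω|} ⊆ T s := by
        intro ω hω
        exact lt_trans ht.1 hω
      exact le_trans (outerM_mono hC hmnn hsub) (key1 s)
    calc ∫⁻ t in Ioc ((2:ℝ)^(s+1)) ((2:ℝ)^(s+2)),
        ENNReal.ofReal (outerM C m {ω | t < |f ω|})
        ≤ ∫⁻ _ in Ioc ((2:ℝ)^(s+1)) ((2:ℝ)^(s+2)), ENNReal.ofReal (2 * L s / q) :=
          MeasureTheory.setLIntegral_mono measurable_const hub
      _ = ENNReal.ofReal (2 * L s / q) * ENNReal.ofReal ((2:ℝ)^(s+1)) := by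
          rw [MeasureTheory.setLIntegral_const, Real.volume_Ioc]
          congr 1
          congr 1
          have : (2:ℝ)^(s+2) = 2 * 2^(s+1) := by ring
          rw [this]; ring
      _ = ENNReal.ofReal ((2 * L s / q) * 2^(s+1)) := by
          rw [ENNReal.ofReal_mul (div_nonneg (by linarith [hLnn s]) hq.le)]
  have htsum : (∑' s : ℕ, ENNReal.ofReal ((2 * L s / q) * 2^(s+1)))
      ≤ ENNReal.ofReal (4 * b / q) := by
    rw [ENNReal.tsum_eq_iSup_sum]
    refine iSup_le ?_
    intro F
    have hFsub : F ⊆ Finset.range (F.sup id + 1) := by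
      intro s hs
      exact Finset.mem_range.2 (Nat.lt_succ_of_le (Finset.le_sup (f := id) hs))
    calc ∑ s ∈ F, ENNReal.ofReal ((2 * L s / q) * 2^(s+1))
        ≤ ∑ s ∈ Finset.range (F.sup id + 1), ENNReal.ofReal ((2 * L s / q) * 2^(s+1)) :=
          Finset.sum_le_sum_of_subset hFsub
      _ = ENNReal.ofReal (∑ s ∈ Finset.range (F.sup id + 1), (2 * L s / q) * 2^(s+1)) := by
          rw [ENNReal.ofReal_sum_of_nonneg]
          intro s _
          have := hLnn s
          positivity
      _ ≤ ENNReal.ofReal (4 * b / q) := by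
          refine ENNReal.ofReal_le_ofReal ?_
          have heq : ∑ s ∈ Finset.range (F.sup id + 1), (2 * L s / q) * 2^(s+1)
              = (4 / q) * ∑ s ∈ Finset.range (F.sup id + 1), (2:ℝ)^s * L s := by
            rw [Finset.mul_sum]
            refine Finset.sum_congr rfl ?_
            intro s _
            have : (2:ℝ)^(s+1) = 2 * 2^s := by ring
            rw [this]
            field_simp
            ring
          rw [heq]
          have h4q : 0 ≤ 4 / q := by positivity
          calc (4 / q) * ∑ s ∈ Finset.range (F.sup id + 1), (2:ℝ)^s * L s
              ≤ (4 / q) * b := mul_le_mul_of_nonneg_left (key2 _) h4q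
            _ = 4 * b / q := by ring
  calc faL1 C m f
      = ∫⁻ t in Ioi (0:ℝ), ENNReal.ofReal (outerM C m {ω | t < |f ω|}) := rfl
    _ ≤ ∫⁻ t in (Ioc (0:ℝ) 2 ∪ ⋃ s : ℕ, Ioc ((2:ℝ)^(s+1)) ((2:ℝ)^(s+2))),
        ENNReal.ofReal (outerM C m {ω | t < |f ω|}) :=
        MeasureTheory.lintegral_mono_set hcover
    _ = (∫⁻ t in Ioc (0:ℝ) 2, ENNReal.ofReal (outerM C m {ω | t < |f ω|}))
        + ∫⁻ t in (⋃ s : ℕ, Ioc ((2:ℝ)^(s+1)) ((2:ℝ)^(s+2))),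
            ENNReal.ofReal (outerM C m {ω | t < |f ω|}) :=
        MeasureTheory.lintegral_union hmeas2 hdisj2
    _ ≤ ENNReal.ofReal 2 + ENNReal.ofReal (4 * b / q) := by
        refine add_le_add hfirst ?_
        calc ∫⁻ t in (⋃ s : ℕ, Ioc ((2:ℝ)^(s+1)) ((2:ℝ)^(s+2))),
            ENNReal.ofReal (outerM C m {ω | t < |f ω|})
            ≤ ∑' s : ℕ, ∫⁻ t in Ioc ((2:ℝ)^(s+1)) ((2:ℝ)^(s+2)),
                ENNReal.ofReal (outerM C m {ω | t < |f ω|}) :=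
              MeasureTheory.lintegral_iUnion_le _ _
          _ ≤ ∑' s : ℕ, ENNReal.ofReal ((2 * L s / q) * 2^(s+1)) :=
              ENNReal.tsum_le_tsum hpiece2
          _ ≤ ENNReal.ofReal (4 * b / q) := htsum
    _ < ⊤ := by
        exact ENNReal.add_lt_top.2 ⟨ENNReal.ofReal_lt_top, ENNReal.ofReal_lt_top⟩

end CL7
/-- Let `(μ n)` be a norm bounded sequence in `ba(C)` and
`K n ⊆ K (n+1) ∩ L¹(μ n)`, `K = ⋃ n, K n`. If `sup_k limsup_n ‖|μ n| ∧ |μ k|‖ > 0` and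
`limsup_n ‖f‖_{L¹(μ n)} < ∞` for every `f ∈ K`, then there is a finitely additive
probability `μ` with `K ⊆ L¹(μ)`. -/
theorem common_L1_space {Ω : Type} (C : Set (Set Ω)) (hC : IsSetAlg C)
    (μ : ℕ → Set Ω → ℝ) (hμ : ∀ n, Memba C (μ n))
    (hbdd : ∃ M : ℝ, ∀ n, tvNorm C (μ n) ≤ M)
    (K : ℕ → Set (Ω → ℝ))
    (hKmono : ∀ n, K n ⊆ K (n + 1))
    (hKL1 : ∀ n, ∀ f ∈ K n, MemFAL1 C (fun A => totalVar C (μ n) A) f)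
    (hinf : 0 < ⨆ k : ℕ, Filter.limsup (fun n =>
      tvNorm C (baInf C (fun A => totalVar C (μ n) A)
        (fun A => totalVar C (μ k) A))) atTop)
    (hL1bdd : ∀ f ∈ ⋃ n, K n,
      Filter.limsup (fun n => faL1 C (fun A => totalVar C (μ n) A) f) atTop < ⊤) :
    ∃ m : Set Ω → ℝ, IsFAProb C m ∧ ∀ f ∈ ⋃ n, K n, MemFAL1 C m f := by
  classical
  have hfa : ∀ n, IsFinAdd C (μ n) := fun n => (hμ n).1
  have hBV : ∀ n, BddVar C (μ n) := fun n => (hμ n).2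
  have hladd : ∀ n, AddOn C (totalVar C (μ n)) := fun n => totalVar_addOn hC (hfa n) (hBV n)
  have hlnnS : ∀ (n : ℕ) (S : Set Ω), 0 ≤ totalVar C (μ n) S := fun n S => totalVar_nonneg S
  have hl0 : ∀ n, totalVar C (μ n) ∅ = 0 := fun n => totalVar_empty (hfa n).1
  -- Ω is nonempty
  have hΩ : Nonempty Ω := by
    by_contra hemp
    have hIE : IsEmpty Ω := not_nonempty_iff.1 hemp
    have huniv : (univ : Set Ω) = ∅ := Set.univ_eq_empty_iff.2 hIE
    have h1 : ∀ k n : ℕ, tvNorm C (baInf C (fun A => totalVar C (μ n) A)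
        (fun A => totalVar C (μ k) A)) = 0 := by
      intro k n
      rw [tvNorm, huniv]
      exact totalVar_empty (baInf_empty hC (fun S => totalVar_nonneg S)
        (fun S => totalVar_nonneg S) (hl0 n) (hl0 k))
    have h2 : (⨆ k : ℕ, Filter.limsup (fun n =>
        tvNorm C (baInf C (fun A => totalVar C (μ n) A)
          (fun A => totalVar C (μ k) A))) atTop) = 0 := by
      have h3 : ∀ k : ℕ, Filter.limsup (fun n =>
          tvNorm C (baInf C (fun A => totalVar C (μ n) A)
            (fun A => totalVar C (μ k) A))) atTop = 0 := by
        intro k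
        simp only [h1 k]
        exact limsup_const 0
      simp only [h3]
      exact ciSup_const
    rw [h2] at hinf
    exact lt_irrefl 0 hinf
  -- extract k₀
  obtain ⟨k₀, hk₀⟩ : ∃ k, 0 < Filter.limsup (fun n =>
      tvNorm C (baInf C (fun A => totalVar C (μ n) A)
        (fun A => totalVar C (μ k) A))) atTop := by
    by_contra h
    push_neg at h
    have := ciSup_le h
    linarith
  set ν : ℕ → Set Ω → ℝ := fun n => baInf C (fun A => totalVar C (μ n) A)
    (fun A => totalVar C (μ k₀) A) with hν_def
  have hlk0 : totalVar C (μ k₀) (∅ : Set Ω) = 0 := hl0 k₀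
  have hνadd : ∀ n, AddOn C (ν n) := fun n =>
    baInf_addOn hC (hladd n) (hladd k₀) (fun S => totalVar_nonneg S)
      (fun S => totalVar_nonneg S)
  have hνnnS : ∀ (n : ℕ) (S : Set Ω), 0 ≤ ν n S := fun n S =>
    baInf_nonneg (fun S => totalVar_nonneg S) (fun S => totalVar_nonneg S) S
  have hνlk : ∀ (n : ℕ) (A : Set Ω), ν n A ≤ totalVar C (μ k₀) A := fun n A =>
    baInf_le_right hC (fun S => totalVar_nonneg S) (fun S => totalVar_nonneg S) (hl0 n) A
  have hνl : ∀ (n : ℕ) (A : Set Ω), ν n A ≤ totalVar C (μ n) A := fun n A =>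
    baInf_le_left hC (fun S => totalVar_nonneg S) (fun S => totalVar_nonneg S) hlk0 A
  have hν0 : ∀ n, ν n ∅ = 0 := fun n =>
    baInf_empty hC (fun S => totalVar_nonneg S) (fun S => totalVar_nonneg S) (hl0 n) hlk0
  have htv : ∀ n, tvNorm C (ν n) = ν n univ := fun n => by
    rw [tvNorm]
    exact totalVar_of_addOn hC (hνadd n) (fun A _ => hνnnS n A) (hν0 n) (alg_univ hC)
  set δ₀ : ℝ := Filter.limsup (fun n => tvNorm C (ν n)) atTop / 2 with hδ₀_def
  have hδ₀pos : 0 < δ₀ := half_pos hk₀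
  have hδ₀lt : δ₀ < Filter.limsup (fun n => tvNorm C (ν n)) atTop := by
    rw [hδ₀_def]; linarith
  have hfreq : ∃ᶠ n in atTop, δ₀ < tvNorm C (ν n) := by
    by_contra h
    rw [Filter.not_frequently] at h
    have h' : ∀ᶠ n in atTop, tvNorm C (ν n) ≤ δ₀ := h.mono (fun n hn => not_lt.1 hn)
    have hcb : IsCoboundedUnder (· ≤ ·) atTop (fun n => tvNorm C (ν n)) :=
      Filter.isCoboundedUnder_le_of_le atTop (x := 0)
        (fun n => totalVar_nonneg univ)
    have hls := Filter.limsup_le_of_le hcb h'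
    linarith
  have hfreq' : ∃ᶠ n in atTop, n ∈ {n : ℕ | δ₀ < ν n univ} := by
    refine hfreq.mono ?_
    intro n hn
    rw [Set.mem_setOf_eq, ← htv n]
    exact hn
  have hNB : (atTop ⊓ 𝓟 {n : ℕ | δ₀ < ν n univ}).NeBot := by
    rw [← Filter.frequently_iff_neBot]
    exact hfreq'
  set U : Ultrafilter ℕ := @Ultrafilter.of ℕ (atTop ⊓ 𝓟 {n : ℕ | δ₀ < ν n univ}) hNB
    with hU_def
  have hUle : (U : Filter ℕ) ≤ atTop ⊓ 𝓟 {n : ℕ | δ₀ < ν n univ} :=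
    @Ultrafilter.of_le ℕ _ hNB
  have hUatTop : (U : Filter ℕ) ≤ atTop := hUle.trans inf_le_left
  have hUS : {n : ℕ | δ₀ < ν n univ} ∈ U :=
    hUle (Filter.mem_inf_of_right (Filter.mem_principal_self _))
  have hUtail : ∀ j : ℕ, {i : ℕ | j ≤ i} ∈ U := fun j => hUatTop (Filter.mem_atTop j)
  -- the limit measure
  have hlamex : ∀ A : Set Ω, ∃ x, Tendsto (fun n => ν n A) (U : Filter ℕ) (𝓝 x) :=
    fun A => exists_ulim_of_bdd U (fun n => ⟨hνnnS n A, hνlk n A⟩)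
  set lam : Set Ω → ℝ := fun A => ulim U (fun n => ν n A) with hlam_def
  have hlamT : ∀ A : Set Ω, Tendsto (fun n => ν n A) (U : Filter ℕ) (𝓝 (lam A)) :=
    fun A => ulim_spec (hlamex A)
  have hlamnn : ∀ A : Set Ω, 0 ≤ lam A := by
    intro A
    refine le_ulim (hlamex A) ?_
    have : {n : ℕ | 0 ≤ ν n A} = univ := by
      ext n; simp [hνnnS n A]
    rw [this]
    exact Filter.univ_mem
  have hlamadd : AddOn C lam := by
    intro A hA B hB hd
    have h1 : (fun n => ν n (A ∪ B)) = fun n => ν n A + ν n B :=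
      funext (fun n => hνadd n A hA B hB hd)
    have h2 : Tendsto (fun n => ν n A + ν n B) (U : Filter ℕ) (𝓝 (lam A + lam B)) :=
      (hlamT A).add (hlamT B)
    have h3 : Tendsto (fun n => ν n (A ∪ B)) (U : Filter ℕ) (𝓝 (lam A + lam B)) := by
      rw [h1]; exact h2
    exact tendsto_nhds_unique (hlamT _) h3
  have hlam0 : lam ∅ = 0 := by
    have h1 : Tendsto (fun n => ν n (∅ : Set Ω)) (U : Filter ℕ) (𝓝 0) := by
      have he : (fun n => ν n (∅ : Set Ω)) = fun _ => (0 : ℝ) := funext hν0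
      rw [he]
      exact tendsto_const_nhds
    exact tendsto_nhds_unique (hlamT _) h1
  have hq : 0 < lam univ := by
    refine lt_of_lt_of_le hδ₀pos ?_
    refine le_ulim (hlamex univ) ?_
    refine Filter.mem_of_superset hUS ?_
    intro n hn
    simp only [Set.mem_setOf_eq] at hn ⊢
    exact le_of_lt hn
  -- the probability
  set m : Set Ω → ℝ := fun A => if A ∈ C then lam A / lam univ else 0 with hm_def
  have hmC : ∀ A ∈ C, m A = lam A / lam univ := fun A hA => if_pos hA
  have hmnn : ∀ A ∈ C, 0 ≤ m A := fun A hA => by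
    rw [hmC A hA]; exact div_nonneg (hlamnn A) hq.le
  have hmadd : AddOn C m := by
    intro A hA B hB hd
    rw [hmC _ (alg_union hC hA hB), hmC _ hA, hmC _ hB, hlamadd A hA B hB hd, add_div]
  have hm0 : m ∅ = 0 := by rw [hmC _ hC.1, hlam0, zero_div]
  have hmuniv : m univ = 1 := by
    rw [hmC _ (alg_univ hC)]; exact div_self hq.ne'
  refine ⟨m, ⟨⟨⟨hm0, hmadd⟩, ?_⟩, hmnn, hmuniv⟩, ?_⟩
  · -- bounded variation
    refine ⟨1, ?_⟩
    rintro x ⟨π, hπ, rfl⟩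
    have h1 : ∑ E ∈ π, |m E| = ∑ E ∈ π, m E :=
      Finset.sum_congr rfl (fun E hE => abs_of_nonneg (hmnn E (hπ.1 E hE)))
    have h2 := sum_of_partition hC hmadd hm0 hπ
    rw [h1, ← h2, hmuniv]
  · -- every f in K is in L¹(m)
    intro f hf
    obtain ⟨Kj, ⟨j₀, rfl⟩, hj⟩ := hf
    have hchain : ∀ i, j₀ ≤ i → f ∈ K i := by
      intro i hi
      induction i, hi using Nat.le_induction with
      | base => exact hj
      | succ n hn ih => exact hKmono n ih
    constructor
    · -- measurability
      exact measurability_aux hC (hladd k₀) (fun A _ => totalVar_nonneg A)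
        hνadd (fun n A _ => hνnnS n A) (fun n A _ => hνlk n A)
        (l := fun n => totalVar C (μ n)) (fun n A _ => hνl n A)
        hUtail (fun A _ => hlamT A) hq hmC hmnn
        (fun i hi => (hKL1 i f (hchain i hi)).1)
    · -- integrability
      have hb₀ := hL1bdd f (Set.mem_iUnion.2 ⟨j₀, hj⟩)
      have hbEtop : (Filter.limsup (fun n => faL1 C (fun A => totalVar C (μ n) A) f) atTop
          + 1) ≠ ⊤ :=
        ENNReal.add_ne_top.2 ⟨hb₀.ne, ENNReal.one_ne_top⟩
      have hevent : ∀ᶠ i in atTop, faL1 C (fun A => totalVar C (μ i) A) f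
          < Filter.limsup (fun n => faL1 C (fun A => totalVar C (μ n) A) f) atTop + 1 :=
        eventually_lt_of_limsup_lt (ENNReal.lt_add_right hb₀.ne one_ne_zero)
      have hWb : {i : ℕ | faL1 C (totalVar C (μ i)) f
          ≤ Filter.limsup (fun n => faL1 C (fun A => totalVar C (μ n) A) f) atTop + 1} ∈ U := by
        refine hUatTop ?_
        exact Filter.eventually_iff.1 (hevent.mono (fun i h => le_of_lt h))
      exact integrability_aux hC (hladd k₀) (fun A _ => totalVar_nonneg A)
        (l := fun n => totalVar C (μ n)) (fun n A _ => hlnnS n A)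
        hνadd (fun n A _ => hνnnS n A) (fun n A _ => hνlk n A) (fun n A _ => hνl n A)
        (fun A _ => hlamT A) hq rfl hmC hmnn hbEtop hWb
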